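/- Let A ∈ ℝ^{n×n} be invertible, let B ∈ ℝ^{n×n}, b ∈ ℝⁿ, θ ∈ [0,1). Suppose F(x*) = 0 and ‖A^{-1}‖ < 1/[‖B‖ + θ(‖A‖ + ‖B‖)]. Then any sequence {x^k} in ℝⁿ satisfying the inexact Picard condition ‖A x^{k+1} − (B|x^k| + b)‖ ≤ θ‖F(x^k)‖ for all k ≥ 0 converges linearly to x* from any starting point x^0. -/

import Mathlib

open Matrix Filter

/-- Componentwise absolute value of a vector in Euclidean space. -/
noncomputable def vabs {n : ℕ} (x : EuclideanSpace ℝ (Fin n)) : EuclideanSpace ℝ (Fin n) :=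
  WithLp.toLp 2 (fun i => |x i|)

/-- A matrix acting on Euclidean space (so that vector norms are the Euclidean 2-norm). -/
noncomputable def mulV {n : ℕ} (M : Matrix (Fin n) (Fin n) ℝ) (x : EuclideanSpace ℝ (Fin n)) :
    EuclideanSpace ℝ (Fin n) :=
  Matrix.toEuclideanCLM (𝕜 := ℝ) M x

/-- Spectral norm of a real matrix: the operator norm induced by the Euclidean vector norm. -/
noncomputable def spec {n : ℕ} (M : Matrix (Fin n) (Fin n) ℝ) : ℝ :=
  ‖Matrix.toEuclideanCLM (𝕜 := ℝ) M‖

/-- The GAVE residual function `F(x) = A x − B |x| − b`. -/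
noncomputable def gaveF {n : ℕ} (A B : Matrix (Fin n) (Fin n) ℝ)
    (b : EuclideanSpace ℝ (Fin n)) (x : EuclideanSpace ℝ (Fin n)) : EuclideanSpace ℝ (Fin n) :=
  mulV A x - mulV B (vabs x) - b

/-- The AVE residual function `A x − |x| − b` (the GAVE with `B = I`). -/
noncomputable def aveF {n : ℕ} (A : Matrix (Fin n) (Fin n) ℝ)
    (b : EuclideanSpace ℝ (Fin n)) (x : EuclideanSpace ℝ (Fin n)) : EuclideanSpace ℝ (Fin n) :=
  mulV A x - vabs x - b

/-- A sequence converges linearly to `xs`: the distances to `xs` contract by a fixed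
factor `c < 1` at every step, and the sequence tends to `xs`. -/
def ConvergesLinearlyTo {n : ℕ} (x : ℕ → EuclideanSpace ℝ (Fin n))
    (xs : EuclideanSpace ℝ (Fin n)) : Prop :=
  (∃ c : ℝ, 0 ≤ c ∧ c < 1 ∧ ∀ k : ℕ, ‖x (k + 1) - xs‖ ≤ c * ‖x k - xs‖) ∧
    Tendsto x atTop (nhds xs)

lemma vabs_lip {n : ℕ} (u v : EuclideanSpace ℝ (Fin n)) : ‖vabs u - vabs v‖ ≤ ‖u - v‖ := by
  rw [EuclideanSpace.norm_eq, EuclideanSpace.norm_eq]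
  apply Real.sqrt_le_sqrt
  apply Finset.sum_le_sum
  intro i _
  have h1 : (vabs u - vabs v) i = |u i| - |v i| := rfl
  have h2 : (u - v) i = u i - v i := rfl
  rw [h1, h2, Real.norm_eq_abs, Real.norm_eq_abs]
  exact pow_le_pow_left₀ (abs_nonneg _) (abs_abs_sub_abs_le_abs_sub _ _) 2

lemma mulV_sub {n : ℕ} (M : Matrix (Fin n) (Fin n) ℝ) (u v : EuclideanSpace ℝ (Fin n)) :
    mulV M u - mulV M v = mulV M (u - v) := by
  simp [mulV, map_sub]

lemma mulV_inv {n : ℕ} {A : Matrix (Fin n) (Fin n) ℝ} (hA : IsUnit A)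
    (w : EuclideanSpace ℝ (Fin n)) : mulV A⁻¹ (mulV A w) = w := by
  have h : A⁻¹ * A = 1 := Matrix.nonsing_inv_mul A (Matrix.isUnit_iff_isUnit_det A |>.mp hA)
  have : mulV A⁻¹ (mulV A w) = (Matrix.toEuclideanCLM (𝕜 := ℝ) (A⁻¹ * A)) w := by
    simp [mulV, _root_.map_mul, ContinuousLinearMap.mul_apply]
  rw [this, h, _root_.map_one, ContinuousLinearMap.one_apply]

lemma mulV_le {n : ℕ} (M : Matrix (Fin n) (Fin n) ℝ) (w : EuclideanSpace ℝ (Fin n)) :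
    ‖mulV M w‖ ≤ spec M * ‖w‖ := (Matrix.toEuclideanCLM (𝕜 := ℝ) M).le_opNorm w

theorem stmt8 {n : ℕ} (A B : Matrix (Fin n) (Fin n) ℝ)
    (b : EuclideanSpace ℝ (Fin n)) (hA : IsUnit A) (θ : ℝ) (hθ0 : 0 ≤ θ) (hθ1 : θ < 1)
    (xs : EuclideanSpace ℝ (Fin n)) (hxs : gaveF A B b xs = 0)
    (hcond : spec A⁻¹ < 1 / (spec B + θ * (spec A + spec B)))
    (x : ℕ → EuclideanSpace ℝ (Fin n))
    (hx : ∀ k : ℕ, ‖mulV A (x (k + 1)) - (mulV B (vabs (x k)) + b)‖ ≤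
      θ * ‖gaveF A B b (x k)‖) :
    ConvergesLinearlyTo x xs := by
  set D : ℝ := spec B + θ * (spec A + spec B) with hD
  have hD0 : 0 < D := by
    by_contra h
    push_neg at h
    have : (1 : ℝ) / D ≤ 0 := one_div_nonpos.mpr h
    have := lt_of_lt_of_le hcond this
    exact absurd this (not_lt.mpr (norm_nonneg _))
  set c : ℝ := spec A⁻¹ * D with hc
  have hc0 : 0 ≤ c := mul_nonneg (norm_nonneg _) hD0.le
  have hc1 : c < 1 := by
    rw [hc]
    calc spec A⁻¹ * D < (1 / D) * D := by
          apply mul_lt_mul_of_pos_right hcond hD0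
      _ = 1 := by field_simp
  -- fixed point identity
  have hxs' : mulV A xs = mulV B (vabs xs) + b := by
    have := sub_eq_zero.mp (by simpa [gaveF, sub_sub] using hxs)
    exact this
  -- key contraction
  have key : ∀ k : ℕ, ‖x (k + 1) - xs‖ ≤ c * ‖x k - xs‖ := by
    intro k
    set e := x k - xs with he
    set e' := x (k + 1) - xs with he'
    have hid : mulV A (x (k + 1)) - (mulV B (vabs (x k)) + b) =
        mulV A e' - mulV B (vabs (x k) - vabs xs) := by
      rw [he', ← mulV_sub, ← mulV_sub, hxs']
      abel
    have hF : ‖gaveF A B b (x k)‖ ≤ (spec A + spec B) * ‖e‖ := by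
      have hFid : gaveF A B b (x k) = mulV A e - mulV B (vabs (x k) - vabs xs) := by
        rw [he, ← mulV_sub, ← mulV_sub, gaveF, hxs']
        abel
      rw [hFid]
      calc ‖mulV A e - mulV B (vabs (x k) - vabs xs)‖
          ≤ ‖mulV A e‖ + ‖mulV B (vabs (x k) - vabs xs)‖ := norm_sub_le _ _
        _ ≤ spec A * ‖e‖ + spec B * ‖vabs (x k) - vabs xs‖ :=
            add_le_add (mulV_le _ _) (mulV_le _ _)
        _ ≤ spec A * ‖e‖ + spec B * ‖e‖ := by
            gcongr
            exacts [norm_nonneg _, vabs_lip _ _]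
        _ = (spec A + spec B) * ‖e‖ := by ring
    have hAe' : ‖mulV A e'‖ ≤ D * ‖e‖ := by
      calc ‖mulV A e'‖ = ‖(mulV A e' - mulV B (vabs (x k) - vabs xs)) +
            mulV B (vabs (x k) - vabs xs)‖ := by rw [sub_add_cancel]
        _ ≤ ‖mulV A e' - mulV B (vabs (x k) - vabs xs)‖ +
            ‖mulV B (vabs (x k) - vabs xs)‖ := norm_add_le _ _
        _ ≤ θ * ‖gaveF A B b (x k)‖ + spec B * ‖vabs (x k) - vabs xs‖ := by
            apply add_le_add _ (mulV_le _ _)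
            rw [← hid]; exact hx k
        _ ≤ θ * ((spec A + spec B) * ‖e‖) + spec B * ‖e‖ := by
            gcongr
            exacts [norm_nonneg _, vabs_lip _ _]
        _ = D * ‖e‖ := by rw [hD]; ring
    calc ‖e'‖ = ‖mulV A⁻¹ (mulV A e')‖ := by rw [mulV_inv hA]
      _ ≤ spec A⁻¹ * ‖mulV A e'‖ := mulV_le _ _
      _ ≤ spec A⁻¹ * (D * ‖e‖) := by
          exact mul_le_mul_of_nonneg_left hAe' (norm_nonneg _)
      _ = c * ‖e‖ := by rw [hc]; ring
  refine ⟨⟨c, hc0, hc1, key⟩, ?_⟩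
  -- convergence
  have hbound : ∀ k, ‖x k - xs‖ ≤ c ^ k * ‖x 0 - xs‖ := by
    intro k
    induction k with
    | zero => simp
    | succ k ih =>
      calc ‖x (k + 1) - xs‖ ≤ c * ‖x k - xs‖ := key k
        _ ≤ c * (c ^ k * ‖x 0 - xs‖) := mul_le_mul_of_nonneg_left ih hc0
        _ = c ^ (k + 1) * ‖x 0 - xs‖ := by ring
  rw [tendsto_iff_norm_sub_tendsto_zero]
  have hgeo : Tendsto (fun k => c ^ k * ‖x 0 - xs‖) atTop (nhds 0) := by
    have := tendsto_pow_atTop_nhds_zero_of_lt_one hc0 hc1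
    simpa using this.mul_const ‖x 0 - xs‖
  exact squeeze_zero (fun k => norm_nonneg _) hbound hgeo
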